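/- Let M ⊆ ℂ be a connected open set, U ⊆ M a nonempty open subset, and F and E complex Banach spaces. For each s ∈ M let T_s : F → E be a linear map. Assume: (i) T_s is continuous for every s ∈ U; (ii) for every f ∈ F, the map s ↦ T_s(f) is holomorphic on M. Then T_s is a continuous linear map for every s ∈ M. -/

import Mathlib

noncomputable section

open Metric Set Complex Real

section aux

variable {F E : Type*}
    [NormedAddCommGroup F] [NormedSpace ℂ F] [CompleteSpace F]
    [NormedAddCommGroup E] [NormedSpace ℂ E] [CompleteSpace E]

private lemma circleIntegral_add {E : Type*} [NormedAddCommGroup E] [NormedSpace ℂ E]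
    {f g : ℂ → E} {c : ℂ} {R : ℝ} (hf : CircleIntegrable f c R)
    (hg : CircleIntegrable g c R) :
    (∮ z in C(c, R), (f z + g z)) = (∮ z in C(c, R), f z) + ∮ z in C(c, R), g z := by
  simp only [circleIntegral, smul_add, intervalIntegral.integral_add hf.out hg.out]

/-- Propagation of continuity: if `T` is continuous near `c` and all orbits are
holomorphic on `M ⊇ closedBall c r`, then `T z` is continuous for all `z ∈ ball c r`. -/
lemma continuity_propagates {M : Set ℂ} (T : ℂ → F →ₗ[ℂ] E)
    (hThol : ∀ f : F, DifferentiableOn ℂ (fun s => T s f) M)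
    {c : ℂ} {ε r : ℝ} (hε : 0 < ε) (hr : 0 < r)
    (hball : ball c ε ⊆ M) (hcb : closedBall c r ⊆ M)
    (hcont : ∀ w ∈ ball c ε, Continuous (T w))
    {z : ℂ} (hz : z ∈ ball c r) : Continuous (T z) := by
  set ρ : ℝ := min ε r / 2 with hρdef
  have hρ : 0 < ρ := by
    have := lt_min hε hr
    positivity
  have hρε : ρ < ε := by
    have h1 := min_le_left ε r
    have : ρ ≤ ε / 2 := by rw [hρdef]; linarith
    linarith
  have hρr : ρ ≤ r := by
    have h1 := min_le_right ε r
    rw [hρdef]; linarith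
  have hsphere : sphere c ρ ⊆ ball c ε := fun w hw => by
    rw [mem_sphere] at hw
    rw [mem_ball, hw]
    exact hρε
  have hsubM : sphere c ρ ⊆ M := fun w hw => hball (hsphere hw)
  -- Banach–Steinhaus on the small sphere
  set G : sphere c ρ → F →L[ℂ] E := fun w => ⟨T w, hcont w (hsphere w.2)⟩ with hG
  obtain ⟨C₀, hC₀⟩ : ∃ C, ∀ w : sphere c ρ, ‖G w‖ ≤ C := by
    apply banach_steinhaus
    intro f
    obtain ⟨C, hC⟩ := (isCompact_sphere c ρ).exists_bound_of_continuousOn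
      ((hThol f).continuousOn.mono hsubM)
    exact ⟨C, fun w => hC w w.2⟩
  have hTb : ∀ (f : F) (w : ℂ), w ∈ sphere c ρ → ‖T w f‖ ≤ C₀ * ‖f‖ := by
    intro f w hw
    have h1 : ‖G ⟨w, hw⟩ f‖ ≤ ‖G ⟨w, hw⟩‖ * ‖f‖ := (G ⟨w, hw⟩).le_opNorm f
    have h2 : ‖G ⟨w, hw⟩‖ * ‖f‖ ≤ C₀ * ‖f‖ :=
      mul_le_mul_of_nonneg_right (hC₀ ⟨w, hw⟩) (norm_nonneg f)
    exact le_trans h1 h2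
  -- integrability of the Cauchy kernel integrand
  have hinvcont : ContinuousOn (fun w : ℂ => (w - c)⁻¹) (sphere c ρ) := by
    apply ContinuousOn.inv₀ (by fun_prop)
    intro w hw h
    rw [sub_eq_zero] at h
    rw [mem_sphere, h, dist_self] at hw
    exact hρ.ne hw
  have hint : ∀ (f : F) (n : ℕ),
      CircleIntegrable (fun w => (w - c)⁻¹ ^ n • (w - c)⁻¹ • T w f) c ρ := by
    intro f n
    apply ContinuousOn.circleIntegrable hρ.le
    exact (hinvcont.pow n).smul (hinvcont.smul ((hThol f).continuousOn.mono hsubM))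
  -- the coefficients as circle integrals
  have hcoeff : ∀ (f : F) (n : ℕ),
      (cauchyPowerSeries (fun s => T s f) c ρ).coeff n
        = (2 * π * I : ℂ)⁻¹ • ∮ w in C(c, ρ), (w - c)⁻¹ ^ n • (w - c)⁻¹ • T w f := by
    intro f n
    simp [FormalMultilinearSeries.coeff, cauchyPowerSeries,
      ContinuousMultilinearMap.mkPiRing_apply]
  -- coefficient linear maps
  set A : ℕ → F →ₗ[ℂ] E := fun n =>
    { toFun := fun f => (cauchyPowerSeries (fun s => T s f) c ρ).coeff n
      map_add' := by
        intro f g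
        simp only [hcoeff]
        have heq : (fun w : ℂ => (w - c)⁻¹ ^ n • (w - c)⁻¹ • T w (f + g))
            = fun w : ℂ => ((w - c)⁻¹ ^ n • (w - c)⁻¹ • T w f)
              + ((w - c)⁻¹ ^ n • (w - c)⁻¹ • T w g) := by
          funext w
          rw [map_add, smul_add, smul_add]
        rw [heq, circleIntegral_add (hint f n) (hint g n), smul_add]
      map_smul' := by
        intro a f
        simp only [RingHom.id_apply, hcoeff]
        have heq : (fun w : ℂ => (w - c)⁻¹ ^ n • (w - c)⁻¹ • T w (a • f))
            = fun w : ℂ => a • ((w - c)⁻¹ ^ n • (w - c)⁻¹ • T w f) := by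
          funext w
          rw [LinearMap.map_smul, smul_comm ((w - c)⁻¹) a, smul_comm ((w - c)⁻¹ ^ n) a]
        rw [heq, circleIntegral.integral_smul, smul_comm] } with hAdef
  have hC₀nonneg : 0 ≤ C₀ := by
    have hmem : (c + ρ : ℂ) ∈ sphere c ρ := by
      rw [mem_sphere, dist_self_add_left]
      simp [Real.norm_eq_abs, _root_.abs_of_nonneg hρ.le]
    exact le_trans (norm_nonneg _) (hC₀ ⟨_, hmem⟩)
  -- norm bound on the coefficients
  have hAbound : ∀ (n : ℕ) (f : F), ‖A n f‖ ≤ C₀ * ρ⁻¹ ^ n * ‖f‖ := by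
    intro n f
    have hAnf : A n f = (2 * π * I : ℂ)⁻¹ • ∮ w in C(c, ρ), (w - c)⁻¹ ^ n • (w - c)⁻¹ • T w f := hcoeff f n
    rw [hAnf, norm_smul]
    have h2pi : ‖(2 * π * I : ℂ)⁻¹‖ = (2 * π)⁻¹ := by
      rw [norm_inv]
      simp [_root_.abs_of_pos Real.pi_pos]
    have hIb : ‖∮ w in C(c, ρ), (w - c)⁻¹ ^ n • (w - c)⁻¹ • T w f‖
        ≤ 2 * π * ρ * (ρ⁻¹ ^ n * ρ⁻¹ * (C₀ * ‖f‖)) := by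
      apply circleIntegral.norm_integral_le_of_norm_le_const hρ.le
      intro w hw
      have hwc : ‖w - c‖ = ρ := by
        rw [← dist_eq_norm]; exact hw
      rw [norm_smul, norm_smul, norm_pow, norm_inv, hwc]
      have := hTb f w hw
      have h0 : (0:ℝ) ≤ ρ⁻¹ ^ n * ρ⁻¹ := by positivity
      calc ρ⁻¹ ^ n * (ρ⁻¹ * ‖T w f‖) = ρ⁻¹ ^ n * ρ⁻¹ * ‖T w f‖ := by ring
        _ ≤ ρ⁻¹ ^ n * ρ⁻¹ * (C₀ * ‖f‖) := mul_le_mul_of_nonneg_left this h0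
    calc ‖(2 * π * I : ℂ)⁻¹‖ * ‖∮ w in C(c, ρ), (w - c)⁻¹ ^ n • (w - c)⁻¹ • T w f‖
        ≤ (2 * π)⁻¹ * (2 * π * ρ * (ρ⁻¹ ^ n * ρ⁻¹ * (C₀ * ‖f‖))) := by
          rw [h2pi]
          exact mul_le_mul_of_nonneg_left hIb (by positivity)
      _ = C₀ * ρ⁻¹ ^ n * ‖f‖ := by
          have hρ' : ρ ≠ 0 := hρ.ne'
          have hπ : π ≠ 0 := Real.pi_ne_zero
          field_simp
  set g : ℕ → F →L[ℂ] E := fun n => (A n).mkContinuous (C₀ * ρ⁻¹ ^ n) (hAbound n) with hgdef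
  have hgapply : ∀ (n : ℕ) (f : F), g n f = (cauchyPowerSeries (fun s => T s f) c ρ).coeff n :=
    fun n f => rfl
  -- the two power series (radius r and radius ρ) agree
  set Rnn : NNReal := ⟨r, hr.le⟩ with hRnn
  set ρnn : NNReal := ⟨ρ, hρ.le⟩ with hρnn
  have hps : ∀ f : F, HasFPowerSeriesOnBall (fun s => T s f)
      (cauchyPowerSeries (fun s => T s f) c r) c Rnn := fun f =>
    DifferentiableOn.hasFPowerSeriesOnBall (R := Rnn) ((hThol f).mono hcb) (by exact_mod_cast hr)
  have hcbρ : closedBall c ρ ⊆ M :=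
    subset_trans (closedBall_subset_closedBall hρr) hcb
  have hpsρ : ∀ f : F, HasFPowerSeriesOnBall (fun s => T s f)
      (cauchyPowerSeries (fun s => T s f) c ρ) c ρnn := fun f =>
    DifferentiableOn.hasFPowerSeriesOnBall (R := ρnn) ((hThol f).mono hcbρ) (by exact_mod_cast hρ)
  have hsame : ∀ f : F, cauchyPowerSeries (fun s => T s f) c r
      = cauchyPowerSeries (fun s => T s f) c ρ := fun f =>
    (hps f).hasFPowerSeriesAt.eq_formalMultilinearSeries (hpsρ f).hasFPowerSeriesAt
  -- set up radii
  have hδ : dist z c < r := mem_ball.mp hz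
  have hδ0 : (0:ℝ) ≤ dist z c := dist_nonneg
  set r' : ℝ := (dist z c + r) / 2 with hr'def
  have h1' : dist z c < r' := by rw [hr'def]; linarith
  have h2' : r' < r := by rw [hr'def]; linarith
  have hr'0 : 0 < r' := by rw [hr'def]; linarith
  -- Banach–Steinhaus #2 on the rescaled coefficients
  obtain ⟨C₁, hC₁⟩ : ∃ C, ∀ n : ℕ, ‖(r' : ℂ) ^ n • g n‖ ≤ C := by
    apply banach_steinhaus
    intro f
    have hlt : ((ENNReal.ofNNReal (⟨r', hr'0.le⟩ : NNReal)))
        < (cauchyPowerSeries (fun s => T s f) c r).radius := by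
      refine lt_of_lt_of_le ?_ (hps f).r_le
      exact ENNReal.coe_lt_coe.2 (NNReal.coe_lt_coe.1 h2')
    obtain ⟨Cf, _, hCf⟩ :=
      (cauchyPowerSeries (fun s => T s f) c r).norm_mul_pow_le_of_lt_radius hlt
    refine ⟨Cf, fun n => ?_⟩
    have hgc : g n f = (cauchyPowerSeries (fun s => T s f) c r).coeff n := by
      rw [hsame f]; rfl
    calc ‖((r' : ℂ) ^ n • g n) f‖ = ‖((r' : ℂ) ^ n) • (g n f)‖ := by
          rw [ContinuousLinearMap.smul_apply]
      _ = r' ^ n * ‖g n f‖ := by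
          rw [norm_smul, norm_pow, Complex.norm_real, Real.norm_of_nonneg hr'0.le]
      _ = ‖cauchyPowerSeries (fun s => T s f) c r n‖ * r' ^ n := by
          rw [hgc, ← FormalMultilinearSeries.norm_apply_eq_norm_coef]; ring
      _ ≤ Cf := hCf n
  have hC₁0 : 0 ≤ C₁ := le_trans (norm_nonneg _) (hC₁ 0)
  -- summability of the operator power series at z
  have hbound : ∀ n : ℕ, ‖(z - c) ^ n • g n‖ ≤ C₁ * (dist z c / r') ^ n := by
    intro n
    have h1 : ‖(z - c) ^ n • g n‖ = ‖(z - c) ^ n‖ * ‖g n‖ := norm_smul ((z - c) ^ n) (g n)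
    rw [norm_pow, ← dist_eq_norm] at h1
    have h2 : ‖(r' : ℂ) ^ n • g n‖ = ‖((r' : ℂ)) ^ n‖ * ‖g n‖ := norm_smul ((r' : ℂ) ^ n) (g n)
    rw [norm_pow, Complex.norm_real, Real.norm_of_nonneg hr'0.le] at h2
    rw [h1]
    have h3 : r' ^ n * ‖g n‖ ≤ C₁ := h2 ▸ hC₁ n
    have h4 : dist z c ^ n * ‖g n‖ = (dist z c / r') ^ n * (r' ^ n * ‖g n‖) := by
      rw [div_pow]
      field_simp
    rw [h4, mul_comm C₁]
    exact mul_le_mul_of_nonneg_left h3 (by positivity)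
  have hsummable : Summable (fun n : ℕ => (z - c) ^ n • g n) := by
    apply Summable.of_norm
    apply Summable.of_nonneg_of_le (fun n => norm_nonneg _) hbound
    exact ((summable_geometric_of_lt_one (by positivity)
      ((div_lt_one hr'0).2 h1')).mul_left C₁)
  set S : F →L[ℂ] E := ∑' n : ℕ, (z - c) ^ n • g n with hSdef
  have hS : HasSum (fun n : ℕ => (z - c) ^ n • g n) S := hsummable.hasSum
  have hkey : ∀ f : F, T z f = S f := by
    intro f
    have hsum1 : HasSum (fun n : ℕ => (z - c) ^ n • g n f) (S f) := by
      have := hS.mapL (ContinuousLinearMap.apply ℂ E f)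
      simpa [ContinuousLinearMap.apply_apply] using this
    have hmem : z ∈ Metric.eball c (Rnn : ENNReal) := by
      rw [Metric.emetric_ball_nnreal]
      exact hz
    have hsum2' := (hps f).hasSum_sub hmem
    have heqfun : (fun n : ℕ => cauchyPowerSeries (fun s => T s f) c r n fun _ => z - c)
        = fun n : ℕ => (z - c) ^ n • g n f := by
      funext n
      rw [FormalMultilinearSeries.apply_eq_pow_smul_coeff]
      congr 1
      rw [hgapply, hsame f]
    rw [heqfun] at hsum2'
    exact hsum2'.unique hsum1
  have hfun : (T z : F → E) = (S : F → E) := funext hkey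
  show Continuous (T z : F → E)
  rw [hfun]
  exact S.continuous

end aux

/-- Analytic continuation of continuity for a pointwise-holomorphic family of linear maps
(Banach space case): if `T_s : F → E` is linear for every `s` in a connected open set
`M ⊆ ℂ`, continuous for `s` in a nonempty open subset `U ⊆ M`, and every orbit
`s ↦ T_s(f)` is holomorphic on `M`, then `T_s` is continuous for every `s ∈ M`. -/
theorem stmt6 {F E : Type*}
    [NormedAddCommGroup F] [NormedSpace ℂ F] [CompleteSpace F]
    [NormedAddCommGroup E] [NormedSpace ℂ E] [CompleteSpace E]
    (M U : Set ℂ) (hMopen : IsOpen M) (hMconn : IsConnected M)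
    (hUopen : IsOpen U) (hUsub : U ⊆ M) (hUne : U.Nonempty)
    (T : ℂ → F →ₗ[ℂ] E)
    (hTU : ∀ s ∈ U, Continuous (T s))
    (hThol : ∀ f : F, DifferentiableOn ℂ (fun s => T s f) M) :
    ∀ s ∈ M, Continuous (T s) := by
  set A : Set ℂ :=
    {s | ∃ ε > 0, Metric.ball s ε ⊆ M ∧ ∀ t ∈ Metric.ball s ε, Continuous (T t)} with hAdef
  have hAopen : IsOpen A := by
    rw [Metric.isOpen_iff]
    rintro s ⟨ε, hε, hsub, hcont⟩
    refine ⟨ε / 2, by positivity, ?_⟩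
    intro s' hs'
    rw [Metric.mem_ball] at hs'
    have hsub' : Metric.ball s' (ε / 2) ⊆ Metric.ball s ε := by
      intro t ht
      rw [Metric.mem_ball] at ht ⊢
      calc dist t s ≤ dist t s' + dist s' s := dist_triangle _ _ _
        _ < ε / 2 + ε / 2 := add_lt_add ht hs'
        _ = ε := by ring
    exact ⟨ε / 2, by positivity, subset_trans hsub' hsub,
      fun t ht => hcont t (hsub' ht)⟩
  have hUA : U ⊆ A := by
    intro u hu
    obtain ⟨ε, hε, hsub⟩ := Metric.isOpen_iff.mp hUopen u hu
    exact ⟨ε, hε, subset_trans hsub hUsub, fun t ht => hTU t (hsub ht)⟩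
  have hclosure : closure A ∩ M ⊆ A := by
    rintro s ⟨hscl, hsM⟩
    obtain ⟨ε₀, hε₀, hballM⟩ := Metric.isOpen_iff.mp hMopen s hsM
    set R : ℝ := ε₀ / 2 with hRdef
    have hR : 0 < R := by positivity
    have hcbM : Metric.closedBall s R ⊆ M := by
      intro w hw
      rw [Metric.mem_closedBall] at hw
      exact hballM (by rw [Metric.mem_ball]; rw [hRdef] at hw; linarith)
    obtain ⟨c, hcA, hcd⟩ := Metric.mem_closure_iff.mp hscl (R / 4) (by positivity)
    obtain ⟨ε, hε, hballcM, hcont⟩ := hcA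
    have hcb2 : Metric.closedBall c (R / 2) ⊆ M := by
      intro w hw
      rw [Metric.mem_closedBall] at hw
      apply hcbM
      rw [Metric.mem_closedBall]
      calc dist w s ≤ dist w c + dist c s := dist_triangle _ _ _
        _ ≤ R / 2 + R / 4 := add_le_add hw (le_of_lt (by rwa [dist_comm]))
        _ ≤ R := by linarith
    have hsc : dist s c < R / 4 := hcd
    set εs : ℝ := R / 2 - dist s c with hεsdef
    have hεs : 0 < εs := by rw [hεsdef]; linarith
    have hballs : Metric.ball s εs ⊆ Metric.ball c (R / 2) := by
      intro t ht
      rw [Metric.mem_ball] at ht ⊢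
      calc dist t c ≤ dist t s + dist s c := dist_triangle _ _ _
        _ < εs + dist s c := by linarith
        _ = R / 2 := by rw [hεsdef]; ring
    refine ⟨εs, hεs, ?_, ?_⟩
    · exact subset_trans hballs (subset_trans Metric.ball_subset_closedBall hcb2)
    · intro t ht
      exact continuity_propagates T hThol hε (by positivity : (0:ℝ) < R / 2)
        hballcM hcb2 hcont (hballs ht)
  have hMA : M ⊆ A := by
    obtain ⟨u₀, hu₀⟩ := hUne
    exact hMconn.isPreconnected.subset_of_closure_inter_subset hAopen
      ⟨u₀, hUsub hu₀, hUA hu₀⟩ hclosure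
  intro s hs
  obtain ⟨ε, hε, _, hcont⟩ := hMA hs
  exact hcont s (Metric.mem_ball_self hε)

end
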